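/- If P(z) is a polynomial of degree n ≥ 1 that has no zeros in the open unit disk |z| < 1, then for every R > 1, max_{|z|=R} |P(z)| ≤ ((R^n + 1)/2) · max_{|z|=1} |P(z)|. -/

import Mathlib

open Polynomial Complex Set Metric Filter

/-- The maximum of `|P(w)|` over the unit circle `|w| = 1`. -/
noncomputable def maxMod (P : Polynomial ℂ) : ℝ :=
  sSup ((fun w => ‖P.eval w‖) '' {w : ℂ | ‖w‖ = 1})

noncomputable def Complex.abs : AbsoluteValue ℂ ℝ where
  toFun := fun z => ‖z‖
  map_mul' := norm_mul
  nonneg' := norm_nonneg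
  eq_zero' := fun _ => norm_eq_zero
  add_le' := norm_add_le

lemma Complex.abs_apply (z : ℂ) : Complex.abs z = ‖z‖ := rfl

lemma Complex.abs_def (z : ℂ) : Complex.abs z = ‖z‖ := rfl

lemma Complex.norm_eq_abs (z : ℂ) : ‖z‖ = Complex.abs z := rfl

lemma Complex.abs_ofReal (r : ℝ) : Complex.abs (r : ℂ) = |r| := by
  simp [Complex.abs_apply]

lemma Complex.abs_conj (z : ℂ) : Complex.abs (starRingEnd ℂ z) = Complex.abs z := by
  simp [Complex.abs_apply]

lemma Complex.abs_natCast (n : ℕ) : Complex.abs (n : ℂ) = n := by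
  simp [Complex.abs_apply]

lemma Complex.normSq_eq_abs (z : ℂ) : Complex.normSq z = Complex.abs z ^ 2 := by
  simp [Complex.abs_apply, Complex.normSq_eq_norm_sq]

lemma Complex.continuous_abs : Continuous Complex.abs := continuous_norm

lemma sphere_set : {w : ℂ | Complex.abs w = 1} = sphere (0:ℂ) 1 := by
  ext w; simp [Complex.dist_eq, Complex.abs_def]

lemma le_maxMod (P : Polynomial ℂ) {w : ℂ} (hw : Complex.abs w = 1) :
    Complex.abs (P.eval w) ≤ maxMod P := by
  apply le_csSup
  · rw [show {w : ℂ | ‖w‖ = 1} = sphere (0:ℂ) 1 from sphere_set]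
    exact ((isCompact_sphere (0:ℂ) 1).image (by continuity)).bddAbove
  · exact ⟨w, hw, rfl⟩

lemma evalBall_le (P : Polynomial ℂ) {z : ℂ} (hz : Complex.abs z ≤ 1) :
    Complex.abs (P.eval z) ≤ maxMod P := by
  have := Complex.norm_le_of_forall_mem_frontier_norm_le (U := ball (0:ℂ) 1)
    isBounded_ball (f := fun w => P.eval w) ?_ (C := maxMod P) ?_ (z := z) ?_
  · exact this
  · exact (P.differentiable).diffContOnCl
  · intro w hw
    rw [frontier_ball _ one_ne_zero] at hw
    exact le_maxMod P (by simpa [Complex.dist_eq, Complex.abs_apply] using hw)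
  · rw [closure_ball _ one_ne_zero]
    simpa [Complex.dist_eq, Complex.abs_apply] using hz

lemma maxMod_nonneg (P : Polynomial ℂ) : 0 ≤ maxMod P :=
  le_trans (Complex.abs.nonneg _) (le_maxMod P (w := 1) (by simp))

lemma maxMod_pos {P : Polynomial ℂ} (hP : P ≠ 0) : 0 < maxMod P := by
  rcases lt_or_eq_of_le (maxMod_nonneg P) with h | h
  · exact h
  exfalso
  apply hP
  apply P.eq_zero_of_infinite_isRoot
  apply Set.Infinite.mono (s := (fun x : ℝ => (x:ℂ)) '' Ioo 0 (1/2))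
  · rintro z ⟨x, hx, rfl⟩
    simp only [mem_setOf_eq, IsRoot.def]
    have hz : Complex.abs x ≤ 1 := by
      rw [Complex.abs_ofReal]; rw [abs_of_pos hx.1]; linarith [hx.2]
    have := evalBall_le P hz
    rw [← h] at this
    exact Complex.abs.eq_zero.mp (le_antisymm this (Complex.abs.nonneg _))
  · exact (Set.Ioo_infinite (by norm_num)).image (fun a _ b _ hab => by exact_mod_cast hab)

/-- growth lemma: for `|z| ≥ 1`, `|f z| ≤ |z|^m * maxMod f` if `deg f ≤ m`. -/
lemma growth (f : Polynomial ℂ) {m : ℕ} (hm : f.natDegree ≤ m) {z : ℂ}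
    (hz : 1 ≤ Complex.abs z) : Complex.abs (f.eval z) ≤ Complex.abs z ^ m * maxMod f := by
  have hz0 : z ≠ 0 := by intro h; simp [h] at hz; linarith
  set g := Polynomial.reflect m f with hg
  have ident : ∀ x : ℂ, x ≠ 0 → g.eval x⁻¹ * x ^ m = f.eval x := by
    intro x hx0
    have : Invertible x := invertibleOfNonzero hx0
    have hev := Polynomial.eval₂_reflect_mul_pow (RingHom.id ℂ) x m f hm
    simpa [Polynomial.eval₂_id, invOf_eq_inv] using hev
  have key2 : ∀ u : ℂ, Complex.abs u = 1 → Complex.abs (g.eval u) ≤ maxMod f := by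
    intro u hu
    have hu0 : u ≠ 0 := by intro h; simp [h] at hu
    have h1 := ident u⁻¹ (inv_ne_zero hu0)
    rw [inv_inv] at h1
    have : Complex.abs (g.eval u) * (Complex.abs u)⁻¹ ^ m = Complex.abs (f.eval u⁻¹) := by
      rw [← h1, map_mul, map_pow, map_inv₀]
    rw [hu] at this
    simp only [inv_one, one_pow, mul_one] at this
    rw [this]
    exact le_maxMod f (by rw [map_inv₀, hu, inv_one])
  have keyB : Complex.abs (g.eval z⁻¹) ≤ maxMod f := by
    have h1 : Complex.abs (g.eval z⁻¹) ≤ maxMod g :=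
      evalBall_le g (by rw [map_inv₀]; exact inv_le_one_of_one_le₀ hz)
    refine h1.trans (csSup_le ⟨Complex.abs (g.eval 1), 1, by simp, rfl⟩ ?_)
    rintro x ⟨u, hu, rfl⟩
    exact key2 u hu
  have h2 := ident z hz0
  calc Complex.abs (f.eval z) = Complex.abs (g.eval z⁻¹) * Complex.abs z ^ m := by
        rw [← h2, map_mul, map_pow]
  _ ≤ maxMod f * Complex.abs z ^ m := by
        apply mul_le_mul_of_nonneg_right keyB (by positivity)
  _ = Complex.abs z ^ m * maxMod f := mul_comm _ _

noncomputable def conjRev (n : ℕ) (f : Polynomial ℂ) : Polynomial ℂ :=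
  (f.map (starRingEnd ℂ)).reflect n

lemma coeff_conjRev (n : ℕ) (f : Polynomial ℂ) (k : ℕ) :
    (conjRev n f).coeff k = starRingEnd ℂ (f.coeff (revAt n k)) := by
  rw [conjRev, Polynomial.coeff_reflect, Polynomial.coeff_map]

lemma conjRev_conjRev (n : ℕ) (f : Polynomial ℂ) : conjRev n (conjRev n f) = f := by
  ext k
  rw [coeff_conjRev, coeff_conjRev, revAt_invol]
  exact Complex.conj_conj _

lemma conjRev_add (n : ℕ) (f g : Polynomial ℂ) :
    conjRev n (f + g) = conjRev n f + conjRev n g := by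
  ext k; simp [coeff_conjRev]

lemma conjRev_sub (n : ℕ) (f g : Polynomial ℂ) :
    conjRev n (f - g) = conjRev n f - conjRev n g := by
  ext k; simp [coeff_conjRev]

lemma conjRev_C (n : ℕ) (c : ℂ) : conjRev n (Polynomial.C c) =
    Polynomial.C (starRingEnd ℂ c) * Polynomial.X ^ n := by
  rw [conjRev, Polynomial.map_C, Polynomial.reflect_C]

lemma map_conj_eval (f : Polynomial ℂ) (w : ℂ) :
    (f.map (starRingEnd ℂ)).eval w = starRingEnd ℂ (f.eval (starRingEnd ℂ w)) := by
  conv_lhs => rw [show w = starRingEnd ℂ (starRingEnd ℂ w) from (Complex.conj_conj w).symm]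
  rw [Polynomial.eval_map, Polynomial.eval₂_hom]

lemma conjRev_eval_mul (n : ℕ) (f : Polynomial ℂ) (hf : f.natDegree ≤ n) {w : ℂ} (hw : w ≠ 0) :
    (conjRev n f).eval w * (w⁻¹) ^ n = starRingEnd ℂ (f.eval ((starRingEnd ℂ w)⁻¹)) := by
  have : Invertible (w⁻¹ : ℂ) := invertibleOfNonzero (inv_ne_zero hw)
  have hg : (f.map (starRingEnd ℂ)).natDegree ≤ n := by
    rwa [Polynomial.natDegree_map]
  have hev := Polynomial.eval₂_reflect_mul_pow (RingHom.id ℂ) (w⁻¹) n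
    (f.map (starRingEnd ℂ)) hg
  rw [invOf_eq_inv, inv_inv] at hev
  have : (conjRev n f).eval w * (w⁻¹) ^ n = (f.map (starRingEnd ℂ)).eval w⁻¹ := by
    simpa [Polynomial.eval₂_id, conjRev] using hev
  rw [this, map_conj_eval, map_inv₀]

lemma abs_conjRev_eval (n : ℕ) (f : Polynomial ℂ) (hf : f.natDegree ≤ n) {z : ℂ}
    (hz : Complex.abs z = 1) :
    Complex.abs ((conjRev n f).eval z) = Complex.abs (f.eval z) := by
  have hz0 : z ≠ 0 := by intro h; simp [h] at hz
  have h := conjRev_eval_mul n f hf hz0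
  have habs := congrArg Complex.abs h
  rw [map_mul, map_pow, map_inv₀, hz, inv_one, one_pow, mul_one, Complex.abs_conj] at habs
  rw [habs]
  congr 2
  have h1 : z * starRingEnd ℂ z = 1 := by
    rw [Complex.mul_conj]
    norm_cast
    rw [Complex.normSq_eq_abs, hz]; norm_num
  exact inv_eq_of_mul_eq_one_left h1

/-- auxiliary: product over multiset of roots in closed unit ball -/
lemma gl_aux {w : ℂ} (hw : 1 < Complex.abs w) (m : Multiset ℂ)
    (hm : ∀ r ∈ m, Complex.abs r ≤ 1) :
    (m.map fun r => Polynomial.X - Polynomial.C r).prod.eval w ≠ 0 ∧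
    0 ≤ (w * ((m.map fun r => Polynomial.X - Polynomial.C r).prod.derivative.eval w) *
        starRingEnd ℂ ((m.map fun r => Polynomial.X - Polynomial.C r).prod.eval w)).re ∧
    (m ≠ 0 → 0 < (w * ((m.map fun r => Polynomial.X - Polynomial.C r).prod.derivative.eval w) *
        starRingEnd ℂ ((m.map fun r => Polynomial.X - Polynomial.C r).prod.eval w)).re) := by
  induction m using Multiset.induction_on with
  | empty => simp
  | cons r m ih =>
    have hr : Complex.abs r ≤ 1 := hm r (Multiset.mem_cons_self r m)
    have hm' : ∀ x ∈ m, Complex.abs x ≤ 1 := fun x hx => hm x (Multiset.mem_cons_of_mem hx)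
    obtain ⟨h0, h1, _⟩ := ih hm'
    set q := (m.map fun r => Polynomial.X - Polynomial.C r).prod with hq
    have hprod : ((r ::ₘ m).map fun r => Polynomial.X - Polynomial.C r).prod
        = (Polynomial.X - Polynomial.C r) * q := by
      rw [Multiset.map_cons, Multiset.prod_cons]
    set A := q.eval w with hA
    set B := q.derivative.eval w with hB
    have hwr : w - r ≠ 0 := by
      intro h
      have : Complex.abs w = Complex.abs r := by rw [sub_eq_zero] at h; rw [h]
      linarith
    have heval : ((Polynomial.X - Polynomial.C r) * q).eval w = (w - r) * A := by
      simp [hA]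
    have hderiv : ((Polynomial.X - Polynomial.C r) * q).derivative.eval w
        = A + (w - r) * B := by
      rw [Polynomial.derivative_mul]
      simp [hA, hB]
    have key : 0 < (w * (((Polynomial.X - Polynomial.C r) * q).derivative.eval w) *
        starRingEnd ℂ (((Polynomial.X - Polynomial.C r) * q).eval w)).re := by
      rw [heval, hderiv]
      have expand : w * (A + (w - r) * B) * starRingEnd ℂ ((w - r) * A)
          = (A * starRingEnd ℂ A) * (w * starRingEnd ℂ (w - r))
            + ((w - r) * starRingEnd ℂ (w - r)) * (w * B * starRingEnd ℂ A) := by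
        rw [map_mul]; ring
      rw [expand]
      rw [Complex.mul_conj, Complex.mul_conj]
      rw [Complex.add_re, Complex.re_ofReal_mul, Complex.re_ofReal_mul]
      have term1 : 0 < Complex.normSq A * (w * starRingEnd ℂ (w - r)).re := by
        apply mul_pos
        · exact Complex.normSq_pos.mpr h0
        · have : (w * starRingEnd ℂ (w - r)).re
              = Complex.normSq w - (w * starRingEnd ℂ r).re := by
            rw [map_sub, mul_sub, Complex.sub_re, Complex.mul_conj]
            simp
          rw [this]
          have hb : (w * starRingEnd ℂ r).re ≤ Complex.abs w := by
            calc (w * starRingEnd ℂ r).re ≤ Complex.abs (w * starRingEnd ℂ r) :=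
                  Complex.re_le_norm _
            _ = Complex.abs w * Complex.abs r := by rw [map_mul, Complex.abs_conj]
            _ ≤ Complex.abs w * 1 := by
                  apply mul_le_mul_of_nonneg_left hr (Complex.abs.nonneg w)
            _ = Complex.abs w := mul_one _
          have hns : Complex.normSq w = Complex.abs w * Complex.abs w := by
            rw [Complex.normSq_eq_abs]; ring
          nlinarith [Complex.abs.nonneg w]
      have term2 : 0 ≤ Complex.normSq (w - r) * (w * B * starRingEnd ℂ A).re :=
        mul_nonneg (Complex.normSq_nonneg _) h1
      linarith
    rw [hprod]
    refine ⟨by rw [heval]; exact mul_ne_zero hwr h0, le_of_lt key, fun _ => key⟩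

/-- Gauss–Lucas for the closed unit ball -/
lemma gauss_lucas {s : Polynomial ℂ} (hd : 0 < s.natDegree)
    (hr : ∀ z : ℂ, s.IsRoot z → Complex.abs z ≤ 1) {w : ℂ} (hw : 1 < Complex.abs w) :
    s.derivative.eval w ≠ 0 := by
  have hs0 : s ≠ 0 := fun h => by simp [h] at hd
  have hcard : s.roots.card = s.natDegree :=
    (Polynomial.splits_iff_card_roots.mp (IsAlgClosed.splits s))
  have hfact := Polynomial.C_leadingCoeff_mul_prod_multiset_X_sub_C hcard
  have hroots : ∀ r ∈ s.roots, Complex.abs r ≤ 1 := by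
    intro r hrr
    exact hr r (Polynomial.isRoot_of_mem_roots hrr)
  obtain ⟨h0, _, h2⟩ := gl_aux hw s.roots hroots
  have hne : s.roots ≠ 0 := by
    intro h
    rw [h] at hcard
    simp at hcard
    omega
  have h2' := h2 hne
  intro hcontra
  have : s.derivative = Polynomial.C s.leadingCoeff *
      (s.roots.map fun r => Polynomial.X - Polynomial.C r).prod.derivative := by
    conv_lhs => rw [← hfact]
    rw [Polynomial.derivative_mul, Polynomial.derivative_C, zero_mul, zero_add]
  rw [this] at hcontra
  simp only [Polynomial.eval_mul, Polynomial.eval_C, mul_eq_zero] at hcontra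
  rcases hcontra with h | h
  · exact (Polynomial.leadingCoeff_ne_zero.mpr hs0) h
  · rw [h] at h2'; simp at h2'

/-- If `|h| ≤ |g|` strictly outside the unit circle (where `g ≠ 0`), then `|h| ≤ |g|`
on `|z| ≥ 1` by continuity. -/
lemma le_of_lt_sphere {g h : Polynomial ℂ} (hg : g ≠ 0)
    (H : ∀ w : ℂ, 1 < Complex.abs w → g.eval w ≠ 0 →
      Complex.abs (h.eval w) ≤ Complex.abs (g.eval w))
    {z : ℂ} (hz : 1 ≤ Complex.abs z) :
    Complex.abs (h.eval z) ≤ Complex.abs (g.eval z) := by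
  have hz0 : z ≠ 0 := by intro h; simp [h] at hz; linarith
  set gz := g.comp (Polynomial.C z * Polynomial.X) with hgz
  have hgz0 : gz ≠ 0 := by
    intro hcon
    apply hg
    apply Polynomial.zero_of_eval_zero
    intro x
    have : gz.eval (x / z) = 0 := by rw [hcon]; simp
    rwa [Polynomial.eval_comp, Polynomial.eval_mul, Polynomial.eval_C, Polynomial.eval_X,
      mul_div_cancel₀ _ hz0] at this
  have hBfin : {t : ℝ | gz.eval ↑t = 0}.Finite := by
    have hfin := Polynomial.finite_setOf_isRoot hgz0
    exact hfin.preimage (fun a _ b _ hab => Complex.ofReal_injective hab)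
  have ev0 : ∀ᶠ t : ℝ in nhdsWithin 1 (Ioi 1), t ∉ {t : ℝ | gz.eval ↑t = 0} := by
    have h1 : ∀ᶠ t : ℝ in nhdsWithin 1 (Ioi 1), t ∈ Ioi (1:ℝ) := self_mem_nhdsWithin
    have h2 : ∀ᶠ t : ℝ in nhdsWithin 1 (Ioi 1), t ∉ ({t : ℝ | gz.eval ↑t = 0} \ {1}) := by
      apply eventually_nhdsWithin_of_eventually_nhds
      have hcl : IsClosed ({t : ℝ | gz.eval ↑t = 0} \ {1}) := (hBfin.diff).isClosed
      have h1n : (1:ℝ) ∉ ({t : ℝ | gz.eval ↑t = 0} \ {1}) := by simp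
      exact hcl.isOpen_compl.eventually_mem h1n
    filter_upwards [h1, h2] with t ht1 ht2 htB
    refine ht2 ⟨htB, fun h => ?_⟩
    rw [Set.mem_singleton_iff] at h
    subst h
    exact lt_irrefl 1 (Set.mem_Ioi.mp ht1)
  have ev1 : ∀ᶠ t : ℝ in nhdsWithin 1 (Ioi 1),
      Complex.abs (h.eval (↑t * z)) ≤ Complex.abs (g.eval (↑t * z)) := by
    filter_upwards [ev0, self_mem_nhdsWithin] with t htB ht1
    have ht1' : (1:ℝ) < t := ht1
    apply H
    · rw [map_mul, Complex.abs_ofReal, abs_of_pos (by linarith)]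
      nlinarith
    · intro hcon
      apply htB
      show gz.eval ↑t = 0
      rw [hgz, Polynomial.eval_comp, Polynomial.eval_mul, Polynomial.eval_C, Polynomial.eval_X]
      rw [mul_comm]; exact hcon
  have tendH : Filter.Tendsto (fun t : ℝ => Complex.abs (h.eval (↑t * z)))
      (nhdsWithin 1 (Ioi 1)) (nhds (Complex.abs (h.eval z))) := by
    have : Continuous (fun t : ℝ => Complex.abs (h.eval (↑t * z))) :=
      Complex.continuous_abs.comp (h.continuous.comp
        (Complex.continuous_ofReal.mul continuous_const))
    have h2 := (this.tendsto 1).mono_left (nhdsWithin_le_nhds (s := Ioi (1:ℝ)))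
    simpa using h2
  have tendG : Filter.Tendsto (fun t : ℝ => Complex.abs (g.eval (↑t * z)))
      (nhdsWithin 1 (Ioi 1)) (nhds (Complex.abs (g.eval z))) := by
    have : Continuous (fun t : ℝ => Complex.abs (g.eval (↑t * z))) :=
      Complex.continuous_abs.comp (g.continuous.comp
        (Complex.continuous_ofReal.mul continuous_const))
    have h2 := (this.tendsto 1).mono_left (nhdsWithin_le_nhds (s := Ioi (1:ℝ)))
    simpa using h2
  exact le_of_tendsto_of_tendsto tendH tendG ev1

lemma conjRev_natDegree_le (n : ℕ) (f : Polynomial ℂ) (hf : f.natDegree ≤ n) :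
    (conjRev n f).natDegree ≤ n := by
  apply Polynomial.natDegree_le_iff_coeff_eq_zero.mpr
  intro k hk
  rw [coeff_conjRev, Polynomial.revAt_eq_self_of_lt hk,
    Polynomial.coeff_eq_zero_of_natDegree_lt (lt_of_le_of_lt hf hk)]
  simp

lemma conjRev_C_mul (n : ℕ) (c : ℂ) (f : Polynomial ℂ) :
    conjRev n (Polynomial.C c * f) = Polynomial.C (starRingEnd ℂ c) * conjRev n f := by
  ext k
  simp [coeff_conjRev, Polynomial.coeff_C_mul]

/-- If P has no zeros in the closed unit disk, then |Q| ≤ |P| there. -/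
lemma conjRev_le_on_ball {P : Polynomial ℂ} {n : ℕ} (hdeg : P.natDegree = n)
    (hz : ∀ z : ℂ, Complex.abs z ≤ 1 → P.eval z ≠ 0) {z : ℂ} (hz1 : Complex.abs z ≤ 1) :
    Complex.abs ((conjRev n P).eval z) ≤ Complex.abs (P.eval z) := by
  set Q := conjRev n P with hQ
  have hball : ∀ w : ℂ, w ∈ closedBall (0:ℂ) 1 → Complex.abs w ≤ 1 := by
    intro w hw; simpa [Complex.dist_eq, Complex.abs_apply] using hw
  have key : ∀ w ∈ closure (ball (0:ℂ) 1),
      ‖Q.eval w / P.eval w‖ ≤ 1 := by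
    intro w hw
    refine Complex.norm_le_of_forall_mem_frontier_norm_le (U := ball (0:ℂ) 1)
      isBounded_ball (f := fun x => Q.eval x / P.eval x) ⟨?_, ?_⟩ ?_ hw
    · apply DifferentiableOn.div
      · exact Q.differentiable.differentiableOn
      · exact P.differentiable.differentiableOn
      · intro x hx
        exact hz x (le_of_lt (by simpa [Complex.dist_eq, Complex.abs_apply] using hx))
    · rw [closure_ball _ one_ne_zero]
      apply ContinuousOn.div
      · exact Q.continuous.continuousOn
      · exact P.continuous.continuousOn
      · intro x hx; exact hz x (hball x hx)
    · intro x hx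
      rw [frontier_ball _ one_ne_zero] at hx
      have hx1 : Complex.abs x = 1 := by simpa [Complex.dist_eq, Complex.abs_apply] using hx
      have habs := abs_conjRev_eval n P (le_of_eq hdeg) hx1
      have hPx : Complex.abs (P.eval x) ≠ 0 := Complex.abs.ne_zero (hz x (le_of_eq hx1))
      rw [norm_div, Complex.norm_eq_abs, Complex.norm_eq_abs, hQ, habs]
      exact le_of_eq (div_self hPx)
  have hzc : z ∈ closure (ball (0:ℂ) 1) := by
    rw [closure_ball _ one_ne_zero]
    simpa [Complex.dist_eq, Complex.abs_apply] using hz1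
  have h := key z hzc
  rw [norm_div, Complex.norm_eq_abs, Complex.norm_eq_abs, div_le_one] at h
  · exact h
  · exact (Complex.abs.pos (hz z hz1))

/-- Key lemma: P with no zeros in the closed unit disk, degree n ≥ 1:
`|P'| ≤ |Q'|` on `|w| ≥ 1` where `Q = conjRev n P`. -/
lemma deriv_le_conjRev_deriv {P : Polynomial ℂ} {n : ℕ} (hn : 1 ≤ n)
    (hdeg : P.natDegree = n)
    (hz : ∀ z : ℂ, Complex.abs z ≤ 1 → P.eval z ≠ 0) {w : ℂ} (hw : 1 ≤ Complex.abs w) :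
    Complex.abs (P.derivative.eval w) ≤ Complex.abs ((conjRev n P).derivative.eval w) := by
  set Q := conjRev n P with hQdef
  have hQn : Q.natDegree ≤ n := conjRev_natDegree_le n P (le_of_eq hdeg)
  -- Q' ≠ 0
  have hQ'ne : Q.derivative ≠ 0 := by
    intro hcon
    have hQC : Q = Polynomial.C (Q.coeff 0) := Polynomial.eq_C_of_derivative_eq_zero hcon
    have hP : P = Polynomial.C (starRingEnd ℂ (Q.coeff 0)) * Polynomial.X ^ n := by
      have h1 : conjRev n Q = P := conjRev_conjRev n P
      rw [← h1, hQC, conjRev_C]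
      simp
    apply hz 0 (by simp)
    rw [hP]
    simp [zero_pow (by omega : n ≠ 0)]
  apply le_of_lt_sphere hQ'ne _ hw
  intro v hv hQ'v
  by_contra hcon
  push_neg at hcon
  -- λ̄ with |λ̄| > 1
  set lb := P.derivative.eval v / Q.derivative.eval v with hlb
  have hlb1 : 1 < Complex.abs lb := by
    rw [hlb, map_div₀]
    rw [lt_div_iff₀ (Complex.abs.pos hQ'v), one_mul]
    exact hcon
  set s := P - Polynomial.C lb * Q with hs
  set h := conjRev n s with hh
  have hsn : s.natDegree ≤ n := by
    apply le_trans (Polynomial.natDegree_sub_le _ _)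
    apply max_le (le_of_eq hdeg)
    exact le_trans (Polynomial.natDegree_mul_le) (by simp [hQn])
  -- h = Q - C (conj lb) * P
  have hh2 : h = Q - Polynomial.C (starRingEnd ℂ lb) * P := by
    rw [hh, hs, conjRev_sub, conjRev_C_mul, conjRev_conjRev]
  -- h has no zeros in closed unit ball
  have hhz : ∀ z : ℂ, Complex.abs z ≤ 1 → h.eval z ≠ 0 := by
    intro z hz1 hcon2
    rw [hh2] at hcon2
    simp only [Polynomial.eval_sub, Polynomial.eval_mul, Polynomial.eval_C] at hcon2
    have : Q.eval z = starRingEnd ℂ lb * P.eval z := by linear_combination hcon2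
    have habs := congrArg Complex.abs this
    rw [map_mul, Complex.abs_conj] at habs
    have hle := conjRev_le_on_ball hdeg hz hz1
    rw [← hQdef] at hle
    rw [habs] at hle
    have hP0 := Complex.abs.pos (hz z hz1)
    nlinarith
  -- roots of s are in the closed unit ball
  have hsroots : ∀ z : ℂ, s.IsRoot z → Complex.abs z ≤ 1 := by
    intro z hzr
    by_contra hzc
    push_neg at hzc
    have hz0 : z ≠ 0 := by intro h0; rw [h0] at hzc; simp at hzc; linarith
    -- s = conjRev n h, so h ((conj z)⁻¹) = 0
    have hsc : conjRev n h = s := by rw [hh, conjRev_conjRev]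
    have hmul := conjRev_eval_mul n h (conjRev_natDegree_le n s hsn) hz0
    rw [hsc] at hmul
    rw [Polynomial.IsRoot.def] at hzr
    rw [hzr, zero_mul] at hmul
    have : h.eval ((starRingEnd ℂ z)⁻¹) = 0 := by
      have := congrArg (starRingEnd ℂ) hmul.symm
      simpa using this
    apply hhz ((starRingEnd ℂ z)⁻¹) _ this
    rw [map_inv₀, Complex.abs_conj]
    exact inv_le_one_of_one_le₀ (le_of_lt hzc)
  -- s is nonconstant
  have hsd : 0 < s.natDegree := by
    by_contra hsd0
    push_neg at hsd0
    have : s = Polynomial.C (s.coeff 0) :=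
      Polynomial.eq_C_of_natDegree_le_zero hsd0
    have hhC : h = Polynomial.C (starRingEnd ℂ (s.coeff 0)) * Polynomial.X ^ n := by
      rw [hh]
      conv_lhs => rw [this]
      rw [conjRev_C]
    apply hhz 0 (by simp)
    rw [hhC]
    simp [zero_pow (by omega : n ≠ 0)]
  -- Gauss–Lucas
  have hGL := gauss_lucas hsd hsroots hv
  apply hGL
  rw [hs]
  rw [Polynomial.derivative_sub, Polynomial.derivative_C_mul]
  simp only [Polynomial.eval_sub, Polynomial.eval_mul, Polynomial.eval_C]
  rw [hlb]
  field_simp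
  ring

/-- Bernstein-type inequality: `|f'| ≤ n * maxMod f` on the unit circle. -/
lemma bernstein_aux {f : Polynomial ℂ} {n : ℕ} (hn : 1 ≤ n) (hf : f.natDegree ≤ n)
    (hM : 0 < maxMod f) (hcoeff : Complex.abs (f.coeff n) ≤ maxMod f) {z : ℂ}
    (hz : Complex.abs z = 1) :
    Complex.abs (f.derivative.eval z) ≤ n * maxMod f := by
  set M := maxMod f with hMdef
  set g : Polynomial ℂ := Polynomial.C ((n:ℂ) * M) * Polynomial.X ^ (n-1) with hg
  have hnM : (0:ℝ) < n * M := by positivity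
  have hg0 : g ≠ 0 := by
    rw [hg]
    apply mul_ne_zero
    · simp only [ne_eq, Polynomial.C_eq_zero]
      intro hc
      rw [mul_eq_zero] at hc
      rcases hc with hc | hc
      · exact (Nat.cast_ne_zero.mpr (by omega : n ≠ 0)) hc
      · exact (ne_of_gt hM) (by exact_mod_cast hc)
    · exact pow_ne_zero _ Polynomial.X_ne_zero
  have habsg : ∀ y : ℂ, Complex.abs (g.eval y) = n * M * Complex.abs y ^ (n-1) := by
    intro y
    rw [hg]
    simp only [Polynomial.eval_mul, Polynomial.eval_C, Polynomial.eval_pow, Polynomial.eval_X]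
    rw [map_mul, map_pow, map_mul, Complex.abs_natCast, Complex.abs_ofReal,
      abs_of_pos hM]
  have key := le_of_lt_sphere hg0 (h := f.derivative) ?_ (le_of_eq hz.symm)
  · rw [habsg, hz, one_pow, mul_one] at key
    exact key
  intro v hv hgv
  by_contra hcon
  push_neg at hcon
  rw [habsg] at hcon
  have hv0 : v ≠ 0 := fun h0 => by simp [h0] at hv; linarith
  have hvpow : v ^ (n-1) ≠ 0 := pow_ne_zero _ hv0
  set mu := f.derivative.eval v / ((n:ℂ) * v^(n-1)) with hmu
  have hmuM : M < Complex.abs mu := by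
    rw [hmu, map_div₀, map_mul, map_pow, Complex.abs_natCast]
    rw [lt_div_iff₀ (by positivity)]
    calc M * ((n:ℝ) * Complex.abs v ^ (n-1)) = n * M * Complex.abs v ^ (n-1) := by ring
    _ < Complex.abs (f.derivative.eval v) := hcon
  set u := f - Polynomial.C mu * Polynomial.X ^ n with hu
  have hmu0 : mu ≠ 0 := by
    intro h0
    rw [h0] at hmuM
    simp at hmuM
    linarith
  -- all roots of u in the closed unit ball
  have huroots : ∀ y : ℂ, u.IsRoot y → Complex.abs y ≤ 1 := by
    intro y hy
    by_contra hyc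
    push_neg at hyc
    have hy1 : 1 ≤ Complex.abs y := le_of_lt hyc
    rw [Polynomial.IsRoot.def, hu] at hy
    simp only [Polynomial.eval_sub, Polynomial.eval_mul, Polynomial.eval_C,
      Polynomial.eval_pow, Polynomial.eval_X, sub_eq_zero] at hy
    have h1 := growth f hf hy1
    rw [hy] at h1
    rw [map_mul, map_pow] at h1
    have h2 : Complex.abs y ^ n * M < Complex.abs mu * Complex.abs y ^ n := by
      have hyp : (0:ℝ) < Complex.abs y ^ n := by positivity
      nlinarith
    rw [← hMdef] at h1
    linarith
  have hud : 0 < u.natDegree := by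
    have hcoeffn : u.coeff n ≠ 0 := by
      rw [hu]
      simp only [Polynomial.coeff_sub, Polynomial.coeff_C_mul, Polynomial.coeff_X_pow,
        if_pos rfl, mul_one]
      intro h0
      rw [sub_eq_zero] at h0
      simp only [eq_self_iff_true, if_true, mul_one] at h0
      rw [← h0] at hmuM
      linarith
    have := Polynomial.le_natDegree_of_ne_zero hcoeffn
    omega
  have hGL := gauss_lucas hud huroots hv
  apply hGL
  rw [hu, Polynomial.derivative_sub, Polynomial.derivative_C_mul_X_pow]
  simp only [Polynomial.eval_sub, Polynomial.eval_mul, Polynomial.eval_C,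
    Polynomial.eval_pow, Polynomial.eval_X]
  have hn0 : ((n:ℂ)) ≠ 0 := Nat.cast_ne_zero.mpr (by omega)
  have hmueq : mu * (n:ℂ) * v ^ (n-1) = f.derivative.eval v := by
    rw [hmu]
    field_simp
  rw [hmueq, sub_self]

lemma maxMod_conjRev {P : Polynomial ℂ} {n : ℕ} (hP : P.natDegree ≤ n) :
    maxMod (conjRev n P) = maxMod P := by
  unfold maxMod
  congr 1
  apply Set.image_congr
  intro w hw
  exact abs_conjRev_eval n P hP hw

/-- Erdős–Lax inequality on the unit circle, for `P` with no zeros in the closed unit disk. -/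
lemma erdos_lax {P : Polynomial ℂ} {n : ℕ} (hn : 1 ≤ n) (hdeg : P.natDegree = n)
    (hz : ∀ z : ℂ, Complex.abs z ≤ 1 → P.eval z ≠ 0) {z : ℂ} (hz1 : Complex.abs z = 1) :
    Complex.abs (P.derivative.eval z) ≤ (n : ℝ) * maxMod P / 2 := by
  have hP0 : P ≠ 0 := by
    intro h; rw [h] at hdeg; simp at hdeg; omega
  set M := maxMod P with hMdef
  have hM : 0 < M := maxMod_pos hP0
  set Q := conjRev n P with hQdef
  have hQM : maxMod Q = M := maxMod_conjRev (le_of_eq hdeg)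
  have hz0 : z ≠ 0 := fun h0 => by simp [h0] at hz1
  have hzn1 : Complex.abs (z ^ (n-1)) = 1 := by rw [map_pow, hz1, one_pow]
  have hQcoeff : Complex.abs (Q.coeff n) ≤ maxMod Q := by
    rw [hQdef, coeff_conjRev, Polynomial.revAt_le (le_refl n), Nat.sub_self,
      Complex.abs_conj, hQM]
    rw [Polynomial.coeff_zero_eq_eval_zero]
    exact evalBall_le P (by simp)
  have hQ'le : Complex.abs (Q.derivative.eval z) ≤ n * M := by
    have := bernstein_aux hn (conjRev_natDegree_le n P (le_of_eq hdeg))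
      (hQM ▸ hM) hQcoeff hz1
    rwa [hQM] at this
  have hPQ' : Complex.abs (P.derivative.eval z) ≤ Complex.abs (Q.derivative.eval z) :=
    deriv_le_conjRev_deriv hn hdeg hz (le_of_eq hz1.symm)
  set d := Q.derivative.eval z with hd
  have hnM : (0:ℝ) < n * M := by positivity
  -- for each r > 1, |P'(z)| ≤ r * (n*M) - |d|
  have key : ∀ r : ℝ, 1 < r →
      Complex.abs (P.derivative.eval z) ≤ r * ((n:ℝ) * M) - Complex.abs d := by
    intro r hr
    set V : ℂ := if d = 0 then ((r*(n:ℝ)*M : ℝ):ℂ) else ((r*(n:ℝ)*M / Complex.abs d : ℝ):ℂ) * d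
      with hV
    have habsV : Complex.abs V = r * n * M := by
      rw [hV]
      split_ifs with h0
      · rw [Complex.abs_ofReal, abs_of_pos (by nlinarith)]
      · rw [map_mul, Complex.abs_ofReal, abs_of_pos]
        · rw [div_mul_cancel₀]
          exact Complex.abs.ne_zero h0
        · have := Complex.abs.pos h0
          positivity
    have habsdV : Complex.abs (d - V) = r * n * M - Complex.abs d := by
      rw [hV]
      split_ifs with h0
      · rw [h0, map_zero, zero_sub, map_neg_eq_map, Complex.abs_ofReal,
          abs_of_pos (by nlinarith)]
        ring
      · have hdpos := Complex.abs.pos h0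
        have : d - ((r*(n:ℝ)*M / Complex.abs d : ℝ):ℂ) * d
            = (1 - ((r*(n:ℝ)*M / Complex.abs d : ℝ):ℂ)) * d := by ring
        rw [this, map_mul]
        have h1 : Complex.abs (1 - ((r*(n:ℝ)*M / Complex.abs d : ℝ):ℂ))
            = r*(n:ℝ)*M / Complex.abs d - 1 := by
          rw [show (1:ℂ) - ((r*(n:ℝ)*M / Complex.abs d : ℝ):ℂ)
            = ((1 - r*(n:ℝ)*M / Complex.abs d : ℝ):ℂ) by push_cast; ring]
          rw [Complex.abs_ofReal, abs_of_nonpos, neg_sub]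
          have h2 : (1:ℝ) * (n*M) < r * (n*M) := by nlinarith
          have h3 : Complex.abs d ≤ n * M := hQ'le
          rw [sub_nonpos, le_div_iff₀ hdpos]
          nlinarith
        rw [h1]
        field_simp
    set nu : ℂ := V / ((n:ℂ) * z^(n-1)) with hnu
    have hn0 : ((n:ℂ)) ≠ 0 := Nat.cast_ne_zero.mpr (by omega)
    have hzn0 : z^(n-1) ≠ 0 := pow_ne_zero _ hz0
    have habsnu : Complex.abs nu = r * M := by
      rw [hnu, map_div₀, map_mul, Complex.abs_natCast, hzn1, mul_one, habsV]
      field_simp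
    set f := P - Polynomial.C (starRingEnd ℂ nu) with hf
    have hdegf : f.natDegree = n := by rw [hf, Polynomial.natDegree_sub_C, hdeg]
    have hzf : ∀ y : ℂ, Complex.abs y ≤ 1 → f.eval y ≠ 0 := by
      intro y hy hcon
      rw [hf] at hcon
      simp only [Polynomial.eval_sub, Polynomial.eval_C, sub_eq_zero] at hcon
      have h1 : Complex.abs (P.eval y) ≤ M := evalBall_le P hy
      have h2 := congrArg Complex.abs hcon
      rw [Complex.abs_conj, habsnu] at h2
      nlinarith
    have happ := deriv_le_conjRev_deriv hn hdegf hzf (w := z) (le_of_eq hz1.symm)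
    have hfderiv : f.derivative = P.derivative := by
      rw [hf, Polynomial.derivative_sub, Polynomial.derivative_C, sub_zero]
    have hcr : conjRev n f = Q - Polynomial.C nu * Polynomial.X ^ n := by
      rw [hf, conjRev_sub, conjRev_C, Complex.conj_conj, hQdef]
    have hcrderiv : (conjRev n f).derivative.eval z = d - V := by
      rw [hcr, Polynomial.derivative_sub, Polynomial.derivative_C_mul_X_pow]
      simp only [Polynomial.eval_sub, Polynomial.eval_mul, Polynomial.eval_C,
        Polynomial.eval_pow, Polynomial.eval_X]
      rw [hd, hnu]
      congr 1
      field_simp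
    rw [hfderiv, hcrderiv, habsdV] at happ
    calc Complex.abs (P.derivative.eval z) ≤ r * n * M - Complex.abs d := happ
    _ = r * ((n:ℝ) * M) - Complex.abs d := by ring
  -- take r → 1
  have hsum : Complex.abs (P.derivative.eval z) + Complex.abs d ≤ (n:ℝ) * M := by
    by_contra hcon
    push_neg at hcon
    set X := Complex.abs (P.derivative.eval z) + Complex.abs d with hX
    have hX1 : 1 < X / (n*M) := by rwa [lt_div_iff₀ hnM, one_mul]
    set r := (1 + X/(n*M))/2 with hr
    have hr1 : 1 < r := by rw [hr]; linarith
    have := key r hr1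
    have hrnM : r * ((n:ℝ)*M) < X := by
      rw [hr]
      have hXc : X/(n*M) * (n*M) = X := div_mul_cancel₀ X (ne_of_gt hnM)
      nlinarith
    linarith
  linarith

/-- Ankeny–Rivlin for polynomials with no zeros in the *closed* unit disk. -/
lemma AR_closed {P : Polynomial ℂ} {n : ℕ} (hn : 1 ≤ n) (hdeg : P.natDegree = n)
    (hz : ∀ z : ℂ, Complex.abs z ≤ 1 → P.eval z ≠ 0) {R : ℝ} (hR : 1 < R) {z : ℂ}
    (hzR : Complex.abs z = R) :
    Complex.abs (P.eval z) ≤ (R ^ n + 1) / 2 * maxMod P := by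
  have hP0 : P ≠ 0 := by intro h; rw [h] at hdeg; simp at hdeg; omega
  set M := maxMod P with hMdef
  have hM : 0 < M := maxMod_pos hP0
  have hR0 : (R:ℂ) ≠ 0 := by
    simp only [ne_eq, Complex.ofReal_eq_zero]; linarith
  set u := (R:ℂ)⁻¹ * z with hu
  have hu1 : Complex.abs u = 1 := by
    rw [hu, map_mul, map_inv₀, Complex.abs_ofReal, abs_of_pos (by linarith), hzR]
    field_simp
  have hRu : (R:ℂ) * u = z := by
    rw [hu]; field_simp
  -- derivative bound
  have hD : ∀ w : ℂ, 1 ≤ Complex.abs w →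
      Complex.abs (P.derivative.eval w) ≤ Complex.abs w ^ (n-1) * ((n:ℝ) * M / 2) := by
    intro w hw
    have h1 := growth P.derivative (le_trans (Polynomial.natDegree_derivative_le P)
      (by omega : P.natDegree - 1 ≤ n - 1)) hw
    apply le_trans h1
    apply mul_le_mul_of_nonneg_left _ (by positivity)
    apply csSup_le
    · exact ⟨Complex.abs (P.derivative.eval 1), 1, by simp, rfl⟩
    · rintro x ⟨v, hv, rfl⟩
      exact erdos_lax hn hdeg hz hv
  -- the path derivative
  have hderiv : ∀ t : ℝ, HasDerivAt (fun s : ℝ => P.eval ((s:ℂ) * u))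
      (P.derivative.eval ((t:ℂ) * u) * u) t := by
    intro t
    have H : HasDerivAt (fun w : ℂ => P.eval (w * u))
        (P.derivative.eval (((t:ℂ)) * u) * u) ((t:ℂ)) := by
      have := HasDerivAt.comp (t:ℂ) (Polynomial.hasDerivAt P ((t:ℂ) * u)) (hasDerivAt_mul_const u)
      exact this
    exact H.comp_ofReal
  have hcont : Continuous (fun t : ℝ => P.derivative.eval ((t:ℂ) * u) * u) :=
    ((P.derivative.continuous.comp (Complex.continuous_ofReal.mul continuous_const)).mul
      continuous_const)
  have hftc : ∫ t in (1:ℝ)..R, P.derivative.eval ((t:ℂ) * u) * u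
      = P.eval ((R:ℂ) * u) - P.eval (((1:ℝ):ℂ) * u) := by
    apply intervalIntegral.integral_eq_sub_of_hasDerivAt
    · intro t _
      exact hderiv t
    · exact hcont.intervalIntegrable _ _
  have hnorm1 : ‖∫ t in (1:ℝ)..R, P.derivative.eval ((t:ℂ) * u) * u‖
      ≤ ∫ t in (1:ℝ)..R, ‖P.derivative.eval ((t:ℂ) * u) * u‖ :=
    intervalIntegral.norm_integral_le_integral_norm (le_of_lt hR)
  have hnorm2 : ∫ t in (1:ℝ)..R, ‖P.derivative.eval ((t:ℂ) * u) * u‖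
      ≤ ∫ t in (1:ℝ)..R, ((n:ℝ) * M / 2) * t^(n-1) := by
    apply intervalIntegral.integral_mono_on (le_of_lt hR)
    · exact (hcont.norm.intervalIntegrable _ _)
    · exact ((continuous_const.mul (continuous_pow (n-1))).intervalIntegrable _ _)
    · intro t ht
      have ht1 : 1 ≤ t := ht.1
      have htu : Complex.abs ((t:ℂ) * u) = t := by
        rw [map_mul, hu1, mul_one, Complex.abs_ofReal, abs_of_pos (by linarith)]
      rw [norm_mul, Complex.norm_eq_abs, Complex.norm_eq_abs, hu1, mul_one]
      have := hD ((t:ℂ) * u) (by rw [htu]; exact ht1)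
      rw [htu] at this
      calc Complex.abs (P.derivative.eval ((t:ℂ)*u)) ≤ t^(n-1) * ((n:ℝ)*M/2) := this
      _ = ((n:ℝ)*M/2) * t^(n-1) := by ring
  have hint : ∫ t in (1:ℝ)..R, ((n:ℝ) * M / 2) * t^(n-1)
      = ((n:ℝ) * M / 2) * ((R^n - 1)/n) := by
    rw [intervalIntegral.integral_const_mul, integral_pow]
    congr 1
    have h1 : n - 1 + 1 = n := by omega
    rw [h1, one_pow]
    congr 1
    rw [show ((n-1:ℕ):ℝ) + 1 = ((n-1+1:ℕ):ℝ) by push_cast; ring, h1]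
  have hPu : Complex.abs (P.eval u) ≤ M := le_maxMod P hu1
  have hfinal : Complex.abs (P.eval z)
      ≤ Complex.abs (P.eval u) + ((n:ℝ) * M / 2) * ((R^n - 1)/n) := by
    have h1 : P.eval z = P.eval (((1:ℝ):ℂ) * u)
        + ∫ t in (1:ℝ)..R, P.derivative.eval ((t:ℂ) * u) * u := by
      rw [hftc, hRu]; ring
    rw [h1]
    calc Complex.abs (P.eval (((1:ℝ):ℂ) * u)
          + ∫ t in (1:ℝ)..R, P.derivative.eval ((t:ℂ) * u) * u)
        ≤ Complex.abs (P.eval (((1:ℝ):ℂ) * u))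
          + ‖∫ t in (1:ℝ)..R, P.derivative.eval ((t:ℂ) * u) * u‖ := by
          apply Complex.abs.add_le
    _ ≤ Complex.abs (P.eval u) + ((n:ℝ) * M / 2) * ((R^n - 1)/n) := by
          apply add_le_add
          · apply le_of_eq; norm_num
          · exact le_trans hnorm1 (le_trans hnorm2 (le_of_eq hint))
  apply le_trans hfinal
  have hn0 : (n:ℝ) ≠ 0 := Nat.cast_ne_zero.mpr (by omega)
  have heq : ((n:ℝ) * M / 2) * ((R^n - 1)/n) = M * (R^n - 1) / 2 := by
    field_simp
  rw [heq]
  have hRn : 1 ≤ R^n := one_le_pow₀ (le_of_lt hR)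
  calc Complex.abs (P.eval u) + M * (R^n-1)/2 ≤ M + M * (R^n-1)/2 := by linarith
  _ = (R^n + 1)/2 * M := by ring

/-- Ankeny–Rivlin: if `P` has degree `n ≥ 1`, no zeros in `|z| < 1`, and `R > 1`, then
`max_{|z|=R} |P(z)| ≤ ((R^n + 1)/2) · max_{|z|=1} |P(z)|`. -/
theorem ankeny_rivlin (P : Polynomial ℂ) (n : ℕ) (hn : 1 ≤ n)
    (hdeg : P.natDegree = n)
    (hz : ∀ z : ℂ, ‖z‖ < 1 → P.eval z ≠ 0)
    (R : ℝ) (hR : 1 < R) :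
    ∀ z : ℂ, ‖z‖ = R →
      ‖P.eval z‖ ≤ (R ^ n + 1) / 2 * maxMod P := by
  intro z hzR
  have hfac : (0:ℝ) ≤ (R^n + 1)/2 := by positivity
  have key : ∀ ρ : ℝ, ρ ∈ Ioo (0:ℝ) 1 →
      Complex.abs (P.eval ((ρ:ℂ) * z)) ≤ (R^n + 1)/2 * maxMod P := by
    intro ρ hρ
    obtain ⟨hρ0, hρ1⟩ := hρ
    have hρc : ((ρ:ℂ)) ≠ 0 := by
      simp only [ne_eq, Complex.ofReal_eq_zero]; linarith
    set Pρ := P.comp (Polynomial.C (ρ:ℂ) * Polynomial.X) with hPρ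
    have hdegρ : Pρ.natDegree = n := by
      rw [hPρ, Polynomial.natDegree_comp, Polynomial.natDegree_C_mul_X _ hρc, hdeg, mul_one]
    have hzρ : ∀ y : ℂ, Complex.abs y ≤ 1 → Pρ.eval y ≠ 0 := by
      intro y hy
      rw [hPρ, Polynomial.eval_comp]
      simp only [Polynomial.eval_mul, Polynomial.eval_C, Polynomial.eval_X]
      apply hz
      rw [← Complex.abs_apply, map_mul, Complex.abs_ofReal, abs_of_pos hρ0]
      nlinarith [Complex.abs.nonneg y]
    have hmax : maxMod Pρ ≤ maxMod P := by
      apply csSup_le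
      · exact ⟨Complex.abs (Pρ.eval 1), 1, by simp, rfl⟩
      · rintro x ⟨w, hw, rfl⟩
        have hw1 : Complex.abs w = 1 := hw
        show Complex.abs ((P.comp (Polynomial.C (ρ:ℂ) * Polynomial.X)).eval w) ≤ maxMod P
        rw [Polynomial.eval_comp]
        simp only [Polynomial.eval_mul, Polynomial.eval_C, Polynomial.eval_X]
        apply evalBall_le
        rw [map_mul, Complex.abs_ofReal, abs_of_pos hρ0, hw1, mul_one]
        linarith
    have happ := AR_closed hn hdegρ hzρ hR hzR
    rw [hPρ, Polynomial.eval_comp] at happ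
    simp only [Polynomial.eval_mul, Polynomial.eval_C, Polynomial.eval_X] at happ
    calc Complex.abs (P.eval ((ρ:ℂ) * z)) ≤ (R^n+1)/2 * maxMod Pρ := happ
    _ ≤ (R^n+1)/2 * maxMod P := mul_le_mul_of_nonneg_left hmax hfac
  have tend : Filter.Tendsto (fun ρ : ℝ => Complex.abs (P.eval ((ρ:ℂ) * z)))
      (nhdsWithin 1 (Iio 1)) (nhds (Complex.abs (P.eval z))) := by
    have hc : Continuous (fun ρ : ℝ => Complex.abs (P.eval ((ρ:ℂ) * z))) :=
      Complex.continuous_abs.comp (P.continuous.comp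
        (Complex.continuous_ofReal.mul continuous_const))
    have := (hc.tendsto 1).mono_left (nhdsWithin_le_nhds (s := Iio (1:ℝ)))
    simpa using this
  have hev : ∀ᶠ ρ : ℝ in nhdsWithin 1 (Iio 1),
      Complex.abs (P.eval ((ρ:ℂ) * z)) ≤ (R^n + 1)/2 * maxMod P := by
    filter_upwards [Ioo_mem_nhdsLT (by norm_num : (0:ℝ) < 1)] with ρ hρ
    exact key ρ hρ
  exact le_of_tendsto tend hev
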